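/- Let F(x) be a real polynomial of degree n ≥ 1 with positive leading coefficient, and suppose that in its Sturm sequence F_0 = F, F_1 = F', F_i = −rem(F_{i−2}, F_{i−1}), some F_i has negative leading coefficient or |deg(F_i) − deg(F_{i+1})| > 1 for some i. Then F is not real-rooted (has a non-real complex root). -/

import Mathlib

open Polynomial Finset

namespace Stmt14


lemma sign_prod {ι : Type*} [DecidableEq ι] (s : Finset ι) (f : ι → ℝ)
    (h : ∀ j ∈ s, f j ≠ 0) :
    0 < (-1 : ℝ) ^ (s.filter (fun j => f j < 0)).card * ∏ j ∈ s, f j := by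
  induction s using Finset.induction with
  | empty => simp
  | @insert a s' ha ih =>
    have hfa := h a (mem_insert_self a s')
    have ih' := ih (fun j hj => h j (mem_insert_of_mem hj))
    rw [Finset.prod_insert ha, Finset.filter_insert]
    rcases lt_or_gt_of_ne hfa with hneg | hpos
    · rw [if_pos hneg, Finset.card_insert_of_notMem (by simp [ha]), pow_succ]
      have : (-1:ℝ) ^ (s'.filter (fun j => f j < 0)).card * -1 * (f a * ∏ j ∈ s', f j)
          = (-f a) * ((-1:ℝ) ^ (s'.filter (fun j => f j < 0)).card * ∏ j ∈ s', f j) := by ring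
      rw [this]
      exact mul_pos (by linarith) ih'
    · rw [if_neg (by linarith)]
      have : (-1:ℝ) ^ (s'.filter (fun j => f j < 0)).card * (f a * ∏ j ∈ s', f j)
          = f a * ((-1:ℝ) ^ (s'.filter (fun j => f j < 0)).card * ∏ j ∈ s', f j) := by ring
      rw [this]
      exact mul_pos hpos ih'

lemma exists_root_between (P : Polynomial ℝ) {a b : ℝ} (hab : a < b)
    (h : P.eval a * P.eval b < 0) : ∃ c, a < c ∧ c < b ∧ P.eval c = 0 := by
  have hc : ContinuousOn (fun x => P.eval x) (Set.Icc a b) :=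
    (Polynomial.continuous P).continuousOn
  rcases lt_trichotomy (P.eval a) 0 with hA | hA | hA
  · have hB : 0 < P.eval b := by nlinarith
    have := intermediate_value_Ioo hab.le hc (Set.mem_Ioo.2 ⟨hA, hB⟩)
    obtain ⟨c, hc1, hc2⟩ := this
    exact ⟨c, hc1.1, hc1.2, hc2⟩
  · exfalso; rw [hA] at h; simp at h
  · have hB : P.eval b < 0 := by nlinarith
    have := intermediate_value_Ioo' hab.le hc (Set.mem_Ioo.2 ⟨hB, hA⟩)
    obtain ⟨c, hc1, hc2⟩ := this
    exact ⟨c, hc1.1, hc1.2, hc2⟩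

lemma rep_lemma {P : Polynomial ℝ} (hP : P ≠ 0) {m : ℕ} (z : Fin m → ℝ)
    (hz : Function.Injective z) (hroots : ∀ i, P.eval (z i) = 0)
    (hdeg : P.natDegree ≤ m) :
    P.natDegree = m ∧ P = C P.leadingCoeff * ∏ i, (X - C (z i)) := by
  classical
  set M : Multiset ℝ := Finset.univ.val.map z with hM
  have hnodup : M.Nodup := Multiset.Nodup.map hz Finset.univ.nodup
  have hle : M ≤ P.roots := by
    rw [Multiset.le_iff_count]
    intro a
    rcases Nat.eq_zero_or_pos (M.count a) with h0 | hpos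
    · omega
    · have haM : a ∈ M := Multiset.count_pos.1 hpos
      obtain ⟨i, _, rfl⟩ := Multiset.mem_map.1 haM
      have h1 : M.count (z i) ≤ 1 := Multiset.nodup_iff_count_le_one.1 hnodup _
      have h2 : 1 ≤ P.roots.count (z i) := by
        rw [Polynomial.count_roots]
        exact (Polynomial.rootMultiplicity_pos hP).2 (hroots i)
      omega
  have hcardM : Multiset.card M = m := by simp [hM]
  have hcards : Multiset.card P.roots ≤ P.natDegree := Polynomial.card_roots' P
  have hge : m ≤ Multiset.card P.roots := by
    have := Multiset.card_le_card hle
    omega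
  have hroots_eq : P.roots = M := (Multiset.eq_of_le_of_card_le hle (by omega)).symm
  have hcard : Multiset.card P.roots = P.natDegree := by omega
  have hsplit : Splits P := Polynomial.splits_iff_card_roots.2 hcard
  have hprod := Polynomial.Splits.eq_prod_roots hsplit
  constructor
  · omega
  · conv_lhs => rw [hprod, hroots_eq, hM, Multiset.map_map]
    rw [Finset.prod_eq_multiset_prod]
    rfl

lemma eval_prod_form {m : ℕ} (l : ℝ) (z : Fin m → ℝ) (y : ℝ) :
    (C l * ∏ i, (X - C (z i))).eval y = l * ∏ i, (y - z i) := by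
  simp [eval_prod]

lemma monic_prodXC {m : ℕ} (z : Fin m → ℝ) : (∏ i, (X - C (z i))).Monic :=
  monic_prod_of_monic _ _ (fun i _ => monic_X_sub_C (z i))

lemma natDegree_prodXC {m : ℕ} (z : Fin m → ℝ) : (∏ i, (X - C (z i))).natDegree = m := by
  rw [Polynomial.natDegree_prod _ _ (fun i _ => X_sub_C_ne_zero (z i))]
  simp

lemma lead_prod_form {m : ℕ} {l : ℝ} (hl : l ≠ 0) (z : Fin m → ℝ) :
    (C l * ∏ i, (X - C (z i))).leadingCoeff = l ∧
    (C l * ∏ i, (X - C (z i))).natDegree = m := by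
  constructor
  · rw [Polynomial.leadingCoeff_mul, Polynomial.leadingCoeff_C, (monic_prodXC z).leadingCoeff,
      mul_one]
  · rw [Polynomial.natDegree_mul (by simpa using hl) (monic_prodXC z).ne_zero]
    simp [natDegree_prodXC]

-- sign of ∏ (y - x j) when x i < y and x j > y for j > i
lemma sign_eval_prod {m : ℕ} {x : Fin m → ℝ} (hx : StrictMono x) {y : ℝ} {i : Fin m}
    (h1 : x i < y) (h2 : ∀ j : Fin m, (i:ℕ) < (j:ℕ) → y < x j) :
    0 < (-1:ℝ) ^ (m - 1 - (i:ℕ)) * ∏ j, (y - x j) := by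
  have hne : ∀ j ∈ (univ : Finset (Fin m)), y - x j ≠ 0 := by
    intro j _
    rcases le_or_gt (j:ℕ) (i:ℕ) with hj | hj
    · have : x j ≤ x i := hx.monotone (by exact_mod_cast hj)
      intro hc; nlinarith [sub_eq_zero.1 hc]
    · have := h2 j hj
      intro hc; nlinarith [sub_eq_zero.1 hc]
  have hfilter : (univ.filter (fun j : Fin m => y - x j < 0)) = Finset.Ioi i := by
    ext j
    simp only [mem_filter, mem_univ, true_and, mem_Ioi, sub_neg]
    constructor
    · intro hj
      by_contra hle
      push_neg at hle
      have : x j ≤ x i := hx.monotone hle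
      linarith
    · intro hj
      exact h2 j hj
  have := sign_prod univ (fun j : Fin m => y - x j) hne
  rwa [hfilter, Fin.card_Ioi] at this

-- sign of ∏_{j ≠ i} (x i - x j)
lemma sign_eval_erase {m : ℕ} {x : Fin m → ℝ} (hx : StrictMono x) (i : Fin m) :
    0 < (-1:ℝ) ^ (m - 1 - (i:ℕ)) * ∏ j ∈ univ.erase i, (x i - x j) := by
  have hne : ∀ j ∈ univ.erase i, x i - x j ≠ 0 := by
    intro j hj
    have hji : j ≠ i := (Finset.mem_erase.1 hj).1
    intro hc
    exact hji (hx.injective (sub_eq_zero.1 hc)).symm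
  have hfilter : ((univ.erase i).filter (fun j : Fin m => x i - x j < 0)) = Finset.Ioi i := by
    ext j
    simp only [mem_filter, Finset.mem_erase, mem_univ, true_and, mem_Ioi, sub_neg, and_true]
    constructor
    · rintro ⟨hji, hlt⟩
      by_contra hle
      push_neg at hle
      have : x j ≤ x i := hx.monotone hle
      linarith
    · intro hj
      exact ⟨hj.ne', hx hj⟩
  have := sign_prod (univ.erase i) (fun j : Fin m => x i - x j) hne
  rwa [hfilter, Fin.card_Ioi] at this

lemma key_mul {e1 e2 : ℕ} {u v : ℝ} (he : e1 = e2 + 1)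
    (h1 : 0 < (-1:ℝ)^e1 * u) (h2 : 0 < (-1:ℝ)^e2 * v) : u * v < 0 := by
  subst he
  rcases Nat.even_or_odd e2 with he | he
  · rw [he.neg_one_pow] at h2
    rw [pow_succ, he.neg_one_pow] at h1
    nlinarith
  · rw [he.neg_one_pow] at h2
    rw [pow_succ, he.neg_one_pow] at h1
    nlinarith

lemma degree_mod_lt' (a : Polynomial ℝ) {b : Polynomial ℝ} (hb : b ≠ 0) :
    (a % b).degree < b.degree := by
  rw [Polynomial.mod_def, ← Polynomial.degree_mul_leadingCoeff_inv b hb]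
  exact Polynomial.degree_modByMonic_lt a (Polynomial.monic_mul_leadingCoeff_inv hb)

lemma mul_mod_mul {G : Polynomial ℝ} (a b : Polynomial ℝ) (hG : G ≠ 0) :
    (G * a) % (G * b) = G * (a % b) := by
  rcases eq_or_ne b 0 with rfl | hb
  · simp [EuclideanDomain.mod_zero]
  · have hGb : G * b ≠ 0 := mul_ne_zero hG hb
    have hc : (G * b).leadingCoeff ≠ 0 := Polynomial.leadingCoeff_ne_zero.2 hGb
    have hM : ((G * b) * C ((G * b).leadingCoeff)⁻¹).Monic :=
      Polynomial.monic_mul_leadingCoeff_inv hGb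
    have hsum : G * (a % b) + ((G * b) * C ((G * b).leadingCoeff)⁻¹) *
        (C ((G * b).leadingCoeff) * (a / b)) = G * a := by
      have : ((G * b) * C ((G * b).leadingCoeff)⁻¹) * (C ((G * b).leadingCoeff) * (a / b))
          = (G * b) * (a / b) := by
        rw [mul_assoc, ← mul_assoc (C ((G * b).leadingCoeff)⁻¹), ← C_mul,
          inv_mul_cancel₀ hc, C_1, one_mul]
      rw [this]
      have := EuclideanDomain.div_add_mod a b
      calc G * (a % b) + G * b * (a / b) = G * (b * (a / b) + a % b) := by ring
        _ = G * a := by rw [this]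
    have hdeg : (G * (a % b)).degree < ((G * b) * C ((G * b).leadingCoeff)⁻¹).degree := by
      rw [Polynomial.degree_mul_leadingCoeff_inv _ hGb]
      rcases eq_or_ne (a % b) 0 with h0 | h0
      · rw [h0, mul_zero, Polynomial.degree_zero]
        exact Ne.bot_lt (fun hbot => hGb (Polynomial.degree_eq_bot.1 hbot))
      · rw [Polynomial.degree_mul, Polynomial.degree_mul]
        exact WithBot.add_lt_add_left (fun hbot => hG (Polynomial.degree_eq_bot.1 hbot))
          (degree_mod_lt' a hb)
    have := Polynomial.div_modByMonic_unique (f := G * a)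
      (C ((G * b).leadingCoeff) * (a / b)) (G * (a % b)) hM ⟨hsum, hdeg⟩
    rw [Polynomial.mod_def]
    exact this.2



lemma card_roots_eq_aux (n : ℕ) : ∀ (F : Polynomial ℝ), F ≠ 0 →
    (∀ z : ℂ, aeval z F = 0 → z.im = 0) → F.natDegree = n →
    Multiset.card F.roots = F.natDegree := by
  induction n using Nat.strong_induction_on with
  | _ n ih =>
  intro F hF h hn
  rcases Nat.eq_zero_or_pos n with h0 | hpos
  · subst h0
    have := Polynomial.card_roots' F
    omega
  · have hmap : F.map (algebraMap ℝ ℂ) ≠ 0 := by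
      simpa using (Polynomial.map_ne_zero_iff (algebraMap ℝ ℂ).injective).2 hF
    obtain ⟨z, hz⟩ := IsAlgClosed.exists_root (F.map (algebraMap ℝ ℂ))
      (by rw [Polynomial.degree_map, Polynomial.degree_eq_natDegree hF, hn]; simp; omega)
    have hz' : aeval z F = 0 := by
      rwa [Polynomial.IsRoot, Polynomial.eval_map, ← Polynomial.aeval_def] at hz
    have him := h z hz'
    set r := z.re with hr
    have hzr : (r : ℂ) = z := Complex.ext (by simp [hr]) (by simp [him])
    have hroot : F.eval r = 0 := by
      have : aeval ((r : ℂ)) F = 0 := by rw [hzr]; exact hz'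
      rw [show ((r:ℂ)) = algebraMap ℝ ℂ r from rfl, Polynomial.aeval_algebraMap_apply] at this
      simpa using this
    obtain ⟨F₁, hF₁⟩ := (Polynomial.dvd_iff_isRoot.2 hroot)
    have hF₁0 : F₁ ≠ 0 := by rintro rfl; simp at hF₁; exact hF hF₁
    have hXr : (X - C r : Polynomial ℝ) ≠ 0 := Polynomial.X_sub_C_ne_zero r
    have hdeg1 : F₁.natDegree = n - 1 := by
      have := Polynomial.natDegree_mul hXr hF₁0
      rw [← hF₁, hn] at this
      simp [Polynomial.natDegree_X_sub_C] at this
      omega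
    have hall : ∀ z : ℂ, aeval z F₁ = 0 → z.im = 0 := by
      intro w hw
      apply h
      rw [hF₁, map_mul, hw, mul_zero]
    have := ih (n-1) (by omega) F₁ hF₁0 hall hdeg1
    rw [hF₁, Polynomial.roots_mul (hF₁ ▸ hF), Polynomial.roots_X_sub_C]
    have hd : ((X - C r) * F₁).natDegree = n := hF₁ ▸ hn
    simp only [Multiset.card_add, Multiset.card_singleton, this, hdeg1, hd]
    omega

lemma card_roots_eq (F : Polynomial ℝ) (hF : F ≠ 0)
    (h : ∀ z : ℂ, aeval z F = 0 → z.im = 0) :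
    Multiset.card F.roots = F.natDegree :=
  card_roots_eq_aux F.natDegree F hF h rfl

/-- interlacing pair -/
def Ilace (P Q : Polynomial ℝ) : Prop :=
  ∃ (k : ℕ) (x : Fin (k+1) → ℝ), StrictMono x ∧
    0 < P.leadingCoeff ∧ 0 < Q.leadingCoeff ∧
    P.natDegree = k + 1 ∧ Q.natDegree = k ∧
    P = C P.leadingCoeff * ∏ i, (X - C (x i)) ∧
    ∀ i : Fin (k+1), 0 < (-1:ℝ) ^ (k - (i:ℕ)) * Q.eval (x i)

lemma Ilace.P_ne_zero {P Q : Polynomial ℝ} (h : Ilace P Q) : P ≠ 0 := by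
  obtain ⟨k, x, _, hlP, _⟩ := h
  exact Polynomial.leadingCoeff_ne_zero.1 hlP.ne'

lemma Ilace.Q_ne_zero {P Q : Polynomial ℝ} (h : Ilace P Q) : Q ≠ 0 := by
  obtain ⟨k, x, _, _, hlQ, _⟩ := h
  exact Polynomial.leadingCoeff_ne_zero.1 hlQ.ne'

lemma ilace_mod_zero {P Q : Polynomial ℝ} (h : Ilace P Q) (h0 : Q.natDegree = 0) :
    P % Q = 0 := by
  have hQ : Q ≠ 0 := h.Q_ne_zero
  have : IsUnit Q := Polynomial.isUnit_iff_degree_eq_zero.2 (by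
    rw [Polynomial.degree_eq_natDegree hQ, h0]; rfl)
  exact EuclideanDomain.mod_eq_zero.2 this.dvd

lemma ilace_step {P Q : Polynomial ℝ} (h : Ilace P Q) (hk : 1 ≤ Q.natDegree) :
    Ilace Q (-(P % Q)) := by
  obtain ⟨k, x, hx, hlP, hlQ, hdP, hdQ, hPform, hsign⟩ := h
  have hQ0 : Q ≠ 0 := Polynomial.leadingCoeff_ne_zero.1 hlQ.ne'
  obtain ⟨k', rfl⟩ : ∃ k', k = k' + 1 := ⟨k - 1, by omega⟩
  -- roots of Q between consecutive x's
  have hy : ∀ i : Fin (k' + 1), ∃ c,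
      x i.castSucc < c ∧ c < x i.succ ∧ Q.eval c = 0 := by
    intro i
    apply exists_root_between Q (hx (Fin.castSucc_lt_succ (i := i)))
    apply key_mul (e1 := k' + 1 - (i.castSucc : ℕ)) (e2 := k' + 1 - (i.succ : ℕ))
    · simp only [Fin.coe_castSucc, Fin.val_succ]
      omega
    · exact hsign i.castSucc
    · exact hsign i.succ
  choose y hy1 hy2 hy3 using hy
  have hymono : StrictMono y := by
    intro i j hij
    calc y i < x i.succ := hy2 i
      _ ≤ x j.castSucc := hx.monotone (by
        simp only [Fin.le_def, Fin.val_succ, Fin.coe_castSucc]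
        exact hij)
      _ < y j := hy1 j
  -- representation of Q
  obtain ⟨hQdegEq, hQform⟩ := rep_lemma hQ0 y hymono.injective hy3 (le_of_eq hdQ)
  set R : Polynomial ℝ := -(P % Q) with hR
  -- eval of R at roots of Q
  have hevalR : ∀ i, R.eval (y i) = - P.eval (y i) := by
    intro i
    have hdm := EuclideanDomain.div_add_mod P Q
    have : Q.eval (y i) * (P / Q).eval (y i) + (P % Q).eval (y i) = P.eval (y i) := by
      rw [← Polynomial.eval_mul, ← Polynomial.eval_add, hdm]
    rw [hy3 i, zero_mul, zero_add] at this
    rw [hR, Polynomial.eval_neg, this]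
  -- sign of P at y i
  have hsignP : ∀ i : Fin (k' + 1), 0 < (-1:ℝ) ^ (k' + 1 - (i:ℕ)) * P.eval (y i) := by
    intro i
    have := sign_eval_prod (y := y i) (i := i.castSucc) hx (hy1 i) (by
      intro j hj
      have : x i.succ ≤ x j := hx.monotone (by
        simp only [Fin.le_def, Fin.val_succ]
        simp only [Fin.coe_castSucc] at hj
        omega)
      linarith [hy2 i])
    rw [hPform, eval_prod_form]
    have heq : k' + 1 + 1 - 1 - (i.castSucc : ℕ) = k' + 1 - (i : ℕ) := by
      simp only [Fin.coe_castSucc]; omega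
    rw [heq] at this
    calc (0:ℝ) < P.leadingCoeff * ((-1:ℝ) ^ (k' + 1 - (i:ℕ)) * ∏ j, (y i - x j)) :=
          mul_pos hlP this
      _ = (-1:ℝ) ^ (k' + 1 - (i:ℕ)) * (P.leadingCoeff * ∏ j, (y i - x j)) := by ring
  -- sign of R at y i
  have hsignR : ∀ i : Fin (k' + 1), 0 < (-1:ℝ) ^ (k' - (i:ℕ)) * R.eval (y i) := by
    intro i
    have h1 := hsignP i
    have hik : (i : ℕ) ≤ k' := by omega
    have : (k' + 1 - (i:ℕ)) = (k' - (i:ℕ)) + 1 := by omega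
    rw [this, pow_succ] at h1
    rw [hevalR i]
    calc (0:ℝ) < (-1:ℝ) ^ (k' - (i:ℕ)) * (-1) * P.eval (y i) := h1
      _ = (-1:ℝ) ^ (k' - (i:ℕ)) * -P.eval (y i) := by ring
  -- R nonzero
  have hR0 : R ≠ 0 := by
    intro hc
    have := hsignR 0
    rw [hc] at this
    simp at this
  -- degree of R
  have hdegR : R.natDegree ≤ k' := by
    have h1 : R.degree < Q.degree := by
      rw [hR, Polynomial.degree_neg]
      exact degree_mod_lt' P hQ0
    have := Polynomial.natDegree_lt_natDegree hR0 h1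
    omega
  -- roots of R between consecutive y's
  have hz : ∀ i : Fin k', ∃ c, y i.castSucc < c ∧ c < y i.succ ∧ R.eval c = 0 := by
    intro i
    apply exists_root_between R (hymono (Fin.castSucc_lt_succ (i := i)))
    apply key_mul (e1 := k' - (i.castSucc : ℕ)) (e2 := k' - (i.succ : ℕ))
    · simp only [Fin.coe_castSucc, Fin.val_succ]
      omega
    · exact hsignR i.castSucc
    · exact hsignR i.succ
  choose z hz1 hz2 hz3 using hz
  have hzmono : StrictMono z := by
    intro i j hij
    calc z i < y i.succ := hz2 i
      _ ≤ y j.castSucc := hymono.monotone (by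
        simp only [Fin.le_def, Fin.val_succ, Fin.coe_castSucc]
        exact hij)
      _ < z j := hz1 j
  obtain ⟨hRdegEq, hRform⟩ := rep_lemma hR0 z hzmono.injective hz3 hdegR
  -- leading coeff of R positive
  have htop : ∀ i : Fin k', z i < y (Fin.last k') := by
    intro i
    calc z i < y i.succ := hz2 i
      _ ≤ y (Fin.last k') := hymono.monotone (Fin.le_last _)
  have hlR : 0 < R.leadingCoeff := by
    have h1 := hsignR (Fin.last k')
    simp only [Fin.val_last, Nat.sub_self, pow_zero, one_mul] at h1
    rw [hRform, eval_prod_form] at h1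
    have hprodpos : 0 < ∏ i, (y (Fin.last k') - z i) :=
      Finset.prod_pos (fun i _ => by linarith [htop i])
    nlinarith [h1, hprodpos]
  exact ⟨k', y, hymono, hlQ, hlR, hdQ, hRdegEq, hQform, hsignR⟩

lemma derivative_finset_prod {ι : Type*} [DecidableEq ι] (s : Finset ι)
    (f : ι → Polynomial ℝ) :
    derivative (∏ i ∈ s, f i) = ∑ j ∈ s, (∏ i ∈ s.erase j, f i) * derivative (f j) := by
  induction s using Finset.induction with
  | empty => simp
  | @insert a s ha ih =>
    rw [Finset.prod_insert ha, derivative_mul, ih, Finset.sum_insert ha,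
      Finset.erase_insert ha, Finset.mul_sum]
    congr 1
    · ring
    · apply Finset.sum_congr rfl
      intro j hj
      have hja : j ≠ a := by rintro rfl; exact ha hj
      rw [Finset.erase_insert_of_ne hja.symm,
        Finset.prod_insert (fun hc => ha (Finset.mem_of_mem_erase hc))]
      ring

lemma base (F : Polynomial ℝ) (hdeg : 1 ≤ F.natDegree) (hlead : 0 < F.leadingCoeff)
    (hcard : Multiset.card F.roots = F.natDegree) :
    ∃ (G t u : Polynomial ℝ), G.Monic ∧ F = G * t ∧ derivative F = G * u ∧ Ilace t u := by
  classical
  have hF0 : F ≠ 0 := fun hc => by simp [hc] at hlead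
  set d : Finset ℝ := F.roots.toFinset with hd
  obtain ⟨k', hk'⟩ : ∃ k', d.card = k' + 1 := by
    have hne : d.Nonempty := by
      rw [hd, Multiset.toFinset_nonempty]
      intro hc
      rw [hc] at hcard
      simp at hcard
      omega
    exact ⟨d.card - 1, by have := Finset.card_pos.2 hne; omega⟩
  set e := d.orderIsoOfFin hk' with he
  set x : Fin (k' + 1) → ℝ := fun i => (e i : ℝ) with hxdef
  have hx : StrictMono x := fun i j hij => by
    simp only [hxdef]
    exact_mod_cast e.strictMono hij
  set m : Fin (k' + 1) → ℕ := fun i => F.roots.count (x i) with hm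
  have hm1 : ∀ i, 1 ≤ m i := by
    intro i
    have hmem : x i ∈ d := (e i).2
    rw [hd, Multiset.mem_toFinset] at hmem
    simpa [hm] using Multiset.one_le_count_iff_mem.2 hmem
  have hroots_sum : F.roots = ∑ i, m i • {x i} := by
    have h1 : ∑ a ∈ d, F.roots.count a • ({a} : Multiset ℝ) = F.roots :=
      Multiset.toFinset_sum_count_nsmul_eq F.roots
    rw [← h1, ← Finset.sum_coe_sort d,
      ← Equiv.sum_comp e.toEquiv (fun a => F.roots.count (a : ℝ) • ({(a : ℝ)} : Multiset ℝ))]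
    rfl
  have hsplit : Splits F := Polynomial.splits_iff_card_roots.2 hcard
  have hFform : F = C F.leadingCoeff * ∏ i, (X - C (x i)) ^ (m i) := by
    have h0 := Polynomial.Splits.eq_prod_roots hsplit
    conv_lhs => rw [h0]
    congr 1
    rw [hroots_sum, ← Multiset.coe_mapAddMonoidHom, map_sum, Multiset.prod_sum]
    apply Finset.prod_congr rfl
    intro i _
    simp [Multiset.coe_mapAddMonoidHom, Multiset.nsmul_singleton, Multiset.map_replicate,
      Multiset.prod_replicate]
  -- define G, t, u
  set G : Polynomial ℝ := ∏ i, (X - C (x i)) ^ (m i - 1) with hG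
  set t : Polynomial ℝ := C F.leadingCoeff * ∏ i, (X - C (x i)) with ht
  set u : Polynomial ℝ := C F.leadingCoeff *
    ∑ j, C (m j : ℝ) * ∏ i ∈ univ.erase j, (X - C (x i)) with hu
  have hGmonic : G.Monic := monic_prod_of_monic _ _
    (fun i _ => (monic_X_sub_C (x i)).pow _)
  have hpow : ∀ i : Fin (k'+1), (X - C (x i)) ^ (m i - 1) * (X - C (x i)) = (X - C (x i)) ^ (m i) := by
    intro i
    rw [← pow_succ, Nat.sub_add_cancel (hm1 i)]
  have hFGt : F = G * t := by
    rw [hFform, hG, ht]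
    have h2 : (∏ i, (X - C (x i)) ^ (m i - 1)) * (C F.leadingCoeff * ∏ i, (X - C (x i)))
        = C F.leadingCoeff * ∏ i, ((X - C (x i)) ^ (m i - 1) * (X - C (x i))) := by
      rw [Finset.prod_mul_distrib]; ring
    rw [h2]
    congr 1
    exact Finset.prod_congr rfl (fun i _ => (hpow i).symm)
  have key : ∀ j : Fin (k'+1), G * ∏ i ∈ univ.erase j, (X - C (x i)) =
      (X - C (x j)) ^ (m j - 1) * ∏ i ∈ univ.erase j, (X - C (x i)) ^ (m i) := by
    intro j
    rw [hG, ← Finset.mul_prod_erase univ _ (mem_univ j), mul_assoc, ← Finset.prod_mul_distrib]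
    congr 1
    exact Finset.prod_congr rfl (fun i _ => hpow i)
  have hderiv : derivative F = G * u := by
    conv_lhs => rw [hFform]
    rw [Polynomial.derivative_C_mul, derivative_finset_prod]
    rw [hu, mul_left_comm]
    congr 1
    rw [Finset.mul_sum]
    apply Finset.sum_congr rfl
    intro j _
    rw [mul_left_comm, key j, Polynomial.derivative_pow, Polynomial.derivative_X_sub_C, mul_one]
    ring
  -- facts about t
  obtain ⟨hlt, hdt⟩ := lead_prod_form hlead.ne' x
  -- facts about u
  have herase_monic : ∀ j : Fin (k'+1), (∏ i ∈ univ.erase j, (X - C (x i))).Monic :=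
    fun j => monic_prod_of_monic _ _ (fun i _ => monic_X_sub_C (x i))
  have herase_deg : ∀ j : Fin (k'+1), (∏ i ∈ univ.erase j, (X - C (x i))).natDegree = k' := by
    intro j
    rw [Polynomial.natDegree_prod _ _ (fun i _ => X_sub_C_ne_zero (x i))]
    simp [Finset.card_erase_of_mem]
  have hcoeffu : u.coeff k' = F.leadingCoeff * ∑ j, (m j : ℝ) := by
    rw [hu, Polynomial.coeff_C_mul, Polynomial.finset_sum_coeff]
    congr 1
    apply Finset.sum_congr rfl
    intro j _
    rw [Polynomial.coeff_C_mul]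
    have := (herase_monic j).coeff_natDegree
    rw [herase_deg j] at this
    rw [this, mul_one]
  have hsumpos : 0 < ∑ j, (m j : ℝ) :=
    Finset.sum_pos (fun j _ => by exact_mod_cast hm1 j) univ_nonempty
  have hcoeffu_pos : 0 < u.coeff k' := by
    rw [hcoeffu]; exact mul_pos hlead hsumpos
  have hdu_le : u.natDegree ≤ k' := by
    rw [hu]
    refine le_trans (Polynomial.natDegree_mul_le) ?_
    simp only [Polynomial.natDegree_C, zero_add]
    apply Polynomial.natDegree_sum_le_of_forall_le
    intro j _
    refine le_trans (Polynomial.natDegree_mul_le) ?_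
    simp [herase_deg j]
  have hdu : u.natDegree = k' :=
    le_antisymm hdu_le (Polynomial.le_natDegree_of_ne_zero hcoeffu_pos.ne')
  have hlu : 0 < u.leadingCoeff := by
    rw [Polynomial.leadingCoeff, hdu]; exact hcoeffu_pos
  -- sign condition
  have hsignu : ∀ i : Fin (k'+1), 0 < (-1:ℝ) ^ (k' - (i:ℕ)) * u.eval (x i) := by
    intro i
    have hevalu : u.eval (x i) =
        F.leadingCoeff * ((m i : ℝ) * ∏ j ∈ univ.erase i, (x i - x j)) := by
      rw [hu, Polynomial.eval_mul, Polynomial.eval_C]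
      congr 1
      rw [Polynomial.eval_finset_sum]
      rw [Finset.sum_eq_single i]
      · simp [eval_prod]
      · intro j _ hj
        rw [Polynomial.eval_mul, eval_prod]
        apply mul_eq_zero_of_right
        apply Finset.prod_eq_zero (Finset.mem_erase.2 ⟨Ne.symm hj, mem_univ i⟩)
        simp
      · intro hc; exact absurd (mem_univ i) hc
    have hs := sign_eval_erase hx i
    have heq : k' + 1 - 1 - (i:ℕ) = k' - (i:ℕ) := by omega
    rw [heq] at hs
    rw [hevalu]
    have hpos : 0 < F.leadingCoeff * (m i : ℝ) :=
      mul_pos hlead (by exact_mod_cast hm1 i)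
    calc (0:ℝ) < (F.leadingCoeff * (m i : ℝ)) *
          ((-1:ℝ) ^ (k' - (i:ℕ)) * ∏ j ∈ univ.erase i, (x i - x j)) := mul_pos hpos hs
      _ = (-1:ℝ) ^ (k' - (i:ℕ)) *
          (F.leadingCoeff * ((m i:ℝ) * ∏ j ∈ univ.erase i, (x i - x j))) := by ring
  refine ⟨G, t, u, hGmonic, hFGt, hderiv, k', x, hx, ?_, hlu, hdt, hdu, ?_, hsignu⟩
  · rw [hlt]; exact hlead
  · rw [hlt, ht]


end Stmt14

open Stmt14 Polynomial in
/-- Let `F` be a real polynomial of degree `n ≥ 1` with positive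
leading coefficient and let `s` be its Sturm sequence: `s 0 = F`, `s 1 = F'`,
`s (i+2) = -(s i % s (i+1))` (relevant while the entries are nonzero). If some
entry of the (nonzero part of the) sequence has negative leading coefficient, or
two consecutive entries have degrees differing by more than 1, then `F` is not
real-rooted. -/
theorem stmt_14 (F : Polynomial ℝ) (hdeg : 1 ≤ F.natDegree) (hlead : 0 < F.leadingCoeff)
    (s : ℕ → Polynomial ℝ)
    (hs0 : s 0 = F) (hs1 : s 1 = Polynomial.derivative F)
    (hs : ∀ i, s (i + 2) = -(s i % s (i + 1)))
    (hbad : ∃ i,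
      ((∀ j ≤ i, s j ≠ 0) ∧ (s i).leadingCoeff < 0) ∨
      ((∀ j ≤ i + 1, s j ≠ 0) ∧
        1 < |((s i).natDegree : ℤ) - ((s (i + 1)).natDegree : ℤ)|)) :
    ∃ z : ℂ, Polynomial.aeval z F = 0 ∧ z.im ≠ 0 := by
  by_contra hcon
  push_neg at hcon
  have hF0 : F ≠ 0 := fun hc => by rw [hc] at hdeg; simp at hdeg
  have hcard := card_roots_eq F hF0 hcon
  obtain ⟨G, t0, u0, hGmonic, hFt, hFu, hIl⟩ := base F hdeg hlead hcard
  have hG0 : G ≠ 0 := hGmonic.ne_zero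
  have claim : ∀ i, (∀ j, j ≤ i + 1 → s j ≠ 0) →
      ∃ t u, s i = G * t ∧ s (i+1) = G * u ∧ Ilace t u := by
    intro i
    induction i with
    | zero =>
      intro _
      exact ⟨t0, u0, by rw [hs0]; exact hFt, by rw [hs1]; exact hFu, hIl⟩
    | succ n ih =>
      intro hnz
      obtain ⟨t, u, h1, h2, hil⟩ := ih (fun j hj => hnz j (by omega))
      have hmod : s (n + 2) = G * (-(t % u)) := by
        rw [hs n, h1, h2, mul_mod_mul _ _ hG0]
        ring
      have hmodne : -(t % u) ≠ 0 := by
        intro hc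
        exact hnz (n + 2) le_rfl (by rw [hmod, hc, mul_zero])
      have hu1 : 1 ≤ u.natDegree := by
        by_contra h
        push_neg at h
        have h0 := ilace_mod_zero hil (by omega)
        exact hmodne (by rw [h0, neg_zero])
      exact ⟨u, -(t % u), h2, hmod, ilace_step hil hu1⟩
  obtain ⟨i, ⟨hnz, hneg⟩ | ⟨hnz, habs⟩⟩ := hbad
  · rcases Nat.eq_zero_or_pos i with rfl | hi
    · rw [hs0] at hneg
      linarith
    · obtain ⟨t, u, h1, h2, hil⟩ := claim (i - 1) (fun j hj => hnz j (by omega))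
      have h2' : s i = G * u := by
        have : i - 1 + 1 = i := by omega
        rwa [this] at h2
      obtain ⟨k, x, hx, hlt, hlu, _⟩ := hil
      have : (s i).leadingCoeff = G.leadingCoeff * u.leadingCoeff := by
        rw [h2', Polynomial.leadingCoeff_mul]
      rw [this, hGmonic.leadingCoeff, one_mul] at hneg
      linarith
  · obtain ⟨t, u, h1, h2, hil⟩ := claim i hnz
    obtain ⟨k, x, hx, hlt, hlu, hdt, hdu, _⟩ := hil
    have ht0 : t ≠ 0 := Polynomial.leadingCoeff_ne_zero.1 hlt.ne'
    have hu0 : u ≠ 0 := Polynomial.leadingCoeff_ne_zero.1 hlu.ne'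
    have d1 : (s i).natDegree = G.natDegree + t.natDegree := by
      rw [h1, Polynomial.natDegree_mul hG0 ht0]
    have d2 : (s (i+1)).natDegree = G.natDegree + u.natDegree := by
      rw [h2, Polynomial.natDegree_mul hG0 hu0]
    rw [d1, d2, hdt, hdu, lt_abs] at habs
    push_cast at habs
    omega
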